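/- The function I_{2c} = u_x²·u_{yy} − 2·u_x·u_y·u_{xy} + u_y²·u_{xx} on the second jet space of functions on ℝ² is invariant under the second prolongation of the sl(2,ℝ) action generated by X₁ = x∂_y, X₂ = x∂_x − y∂_y, X₃ = y∂_x, i.e., L_{X^{(2)}} I_{2c} = 0 for each generator X. -/

import Mathlib

open Matrix

noncomputable section

/-- Coordinates on `J²ℝ²`: `(x, y, u, u_x, u_y, u_xx, u_xy, u_yy)`. -/
def I2c : (Fin 8 → ℝ) → ℝ := fun p =>
  (p 3) ^ 2 * p 7 - 2 * p 3 * p 4 * p 6 + (p 4) ^ 2 * p 5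

/-- Second prolongation of `X₁ = x∂_y`. -/
def X1prol2 : (Fin 8 → ℝ) → (Fin 8 → ℝ) := fun p =>
  ![0, p 0, 0, -(p 4), 0, -2 * p 6, -(p 7), 0]

/-- Second prolongation of `X₂ = x∂_x − y∂_y`. -/
def X2prol2 : (Fin 8 → ℝ) → (Fin 8 → ℝ) := fun p =>
  ![p 0, -(p 1), 0, -(p 3), p 4, -2 * p 5, 0, 2 * p 7]

/-- Second prolongation of `X₃ = y∂_x`. -/
def X3prol2 : (Fin 8 → ℝ) → (Fin 8 → ℝ) := fun p =>
  ![p 1, 0, 0, 0, -(p 3), 0, -(p 5), -2 * p 6]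

lemma I2c_deriv (p v : Fin 8 → ℝ) :
    fderiv ℝ I2c p v =
      2 * p 3 * v 3 * p 7 + (p 3)^2 * v 7
      - (2 * v 3 * p 4 * p 6 + 2 * p 3 * v 4 * p 6 + 2 * p 3 * p 4 * v 6)
      + (2 * p 4 * v 4 * p 5 + (p 4)^2 * v 5) := by
  have hi : ∀ i : Fin 8, HasFDerivAt (fun q : Fin 8 → ℝ => q i)
      (ContinuousLinearMap.proj i : (Fin 8 → ℝ) →L[ℝ] ℝ) p := fun i => hasFDerivAt_apply i p
  rw [show I2c
      = (fun p : Fin 8 → ℝ => p 3 * p 3 * p 7 - 2 * p 3 * p 4 * p 6 + p 4 * p 4 * p 5)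
      from funext fun p => by simp [I2c]; ring]
  have h := ((((hi 3).mul (hi 3)).mul (hi 7)).sub
      ((((hi 3).const_mul 2).mul (hi 4)).mul (hi 6))).add
    (((hi 4).mul (hi 4)).mul (hi 5))
  rw [show fderiv ℝ (fun p : Fin 8 → ℝ => p 3 * p 3 * p 7 - 2 * p 3 * p 4 * p 6 + p 4 * p 4 * p 5) p = _ from h.fderiv]
  simp [ContinuousLinearMap.proj]
  ring

theorem stmt_1 : ∀ p : Fin 8 → ℝ,
    fderiv ℝ I2c p (X1prol2 p) = 0 ∧
    fderiv ℝ I2c p (X2prol2 p) = 0 ∧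
    fderiv ℝ I2c p (X3prol2 p) = 0 := by
  intro p
  refine ⟨?_, ?_, ?_⟩
  · rw [I2c_deriv]
    simp only [show X1prol2 p 3 = -(p 4) from rfl, show X1prol2 p 4 = 0 from rfl, show X1prol2 p 5 = -2 * p 6 from rfl, show X1prol2 p 6 = -(p 7) from rfl, show X1prol2 p 7 = 0 from rfl]
    ring
  · rw [I2c_deriv]
    simp only [show X2prol2 p 3 = -(p 3) from rfl, show X2prol2 p 4 = p 4 from rfl, show X2prol2 p 5 = -2 * p 5 from rfl, show X2prol2 p 6 = 0 from rfl, show X2prol2 p 7 = 2 * p 7 from rfl]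
    ring
  · rw [I2c_deriv]
    simp only [show X3prol2 p 3 = 0 from rfl, show X3prol2 p 4 = -(p 3) from rfl, show X3prol2 p 5 = 0 from rfl, show X3prol2 p 6 = -(p 5) from rfl, show X3prol2 p 7 = -2 * p 6 from rfl]
    ring
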